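/- For every positive integer k, the matrix C_k is positive semidefinite. -/

import Mathlib

open Matrix

/-- All-ones matrix of size `2^k × 2^k`. -/
def Jmat (k : ℕ) : Matrix (Fin (2^k)) (Fin (2^k)) ℝ := Matrix.of fun _ _ => 1

/-- The recursively defined correlation matrices: `Cmat 1 = [[1,-1/2],[-1/2,1]]` and
`Cmat (k+1) = [[Cmat k, -J_k/2^(2k+1)], [-J_k/2^(2k+1), Cmat k]]`.  (`Cmat 0` is the
`1×1` matrix `[1]`, which makes the recursion start correctly at `k = 1`.) -/
noncomputable def Cmat : (k : ℕ) → Matrix (Fin (2^k)) (Fin (2^k)) ℝ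
  | 0 => Matrix.of fun _ _ => 1
  | (k+1) =>
      Matrix.reindex (finSumFinEquiv.trans (finCongr (by ring : 2^k + 2^k = 2^(k+1)))) (finSumFinEquiv.trans (finCongr (by ring : 2^k + 2^k = 2^(k+1))))
        (Matrix.fromBlocks (Cmat k) (-((1:ℝ)/2^(2*k+1)) • Jmat k)
          (-((1:ℝ)/2^(2*k+1)) • Jmat k) (Cmat k))

lemma psd_add {n : Type*} [Fintype n] {A B : Matrix n n ℝ} (hA : A.PosSemidef)
    (hB : B.PosSemidef) : (A + B).PosSemidef := by
  refine ⟨hA.1.add hB.1, fun x => ?_⟩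
  have := add_nonneg (hA.2 x) (hB.2 x)
  exact (hA.add hB).2 x

lemma psd_smul {n : Type*} [Fintype n] {A : Matrix n n ℝ} (hA : A.PosSemidef)
    {c : ℝ} (hc : 0 ≤ c) : (c • A).PosSemidef := by
  refine ⟨?_, fun x => ?_⟩
  · unfold Matrix.IsHermitian
    rw [conjTranspose_smul, hA.1.eq]
    simp
  · have := mul_nonneg hc (hA.2 x)
    exact (hA.smul hc).2 x

lemma psd_blockDiag {n m : Type*} [Fintype n] [Fintype m] [DecidableEq n] [DecidableEq m]
    {A : Matrix n n ℝ} {B : Matrix m m ℝ}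
    (hA : A.PosSemidef) (hB : B.PosSemidef) :
    (Matrix.fromBlocks A 0 0 B).PosSemidef := by
  rw [posSemidef_iff_dotProduct_mulVec] at *
  refine ⟨IsHermitian.fromBlocks hA.1 (by simp) hB.1, fun x => ?_⟩
  have hx : x = Sum.elim (fun i => x (Sum.inl i)) (fun i => x (Sum.inr i)) := by
    ext i; cases i <;> rfl
  rw [hx, fromBlocks_mulVec]
  have h1 := hA.2 (fun i => x (Sum.inl i))
  have h2 := hB.2 (fun i => x (Sum.inr i))
  simp only [star_trivial, dotProduct] at h1 h2 ⊢
  simp only [Fintype.sum_sum_type, Sum.elim_inl, Sum.elim_inr, zero_mulVec, add_zero, zero_add]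
  exact add_nonneg h1 h2

/-- The "signed ones" block matrix `[[J,-J],[-J,J]]` is PSD. -/
lemma psd_W (k : ℕ) :
    (Matrix.fromBlocks (Jmat k) (-(Jmat k)) (-(Jmat k)) (Jmat k)).PosSemidef := by
  set V : Matrix (Fin 1) (Fin (2^k) ⊕ Fin (2^k)) ℝ :=
    Matrix.of fun _ j => Sum.elim (fun _ => (1:ℝ)) (fun _ => -1) j with hV
  have h : Matrix.fromBlocks (Jmat k) (-(Jmat k)) (-(Jmat k)) (Jmat k) = Vᴴ * V := by
    ext i j
    rcases i with i | i <;> rcases j with j | j <;>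
      simp [hV, Matrix.mul_apply, Fin.sum_univ_one, Jmat]
  rw [h]
  exact posSemidef_conjTranspose_mul_self _

lemma Jmat_psd (k : ℕ) : (Jmat k).PosSemidef := by
  set V : Matrix (Fin 1) (Fin (2^k)) ℝ := Matrix.of fun _ _ => (1:ℝ) with hV
  have h : Jmat k = Vᴴ * V := by
    ext i j
    simp [hV, Matrix.mul_apply, Fin.sum_univ_one, Jmat]
  rw [h]
  exact posSemidef_conjTranspose_mul_self _

lemma key (k : ℕ) : (Cmat k - ((2:ℝ)^(2*k))⁻¹ • Jmat k).PosSemidef := by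
  induction k with
  | zero =>
      have : Cmat 0 - ((2:ℝ)^(2*0))⁻¹ • Jmat 0 = 0 := by
        ext i j; simp [Cmat, Jmat]
      rw [this]; exact Matrix.PosSemidef.zero
  | succ k ih =>
      set e := (finSumFinEquiv.trans (finCongr (by ring : 2^k + 2^k = 2^(k+1))))
      set D := Cmat k - ((2:ℝ)^(2*k))⁻¹ • Jmat k with hD
      set c : ℝ := 3 / 2^(2*k+2) with hc
      have hJ : Jmat (k+1) = Matrix.reindex e e
          (Matrix.fromBlocks (Jmat k) (Jmat k) (Jmat k) (Jmat k)) := by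
        ext i j
        rw [reindex_apply, submatrix_apply]
        rcases e.symm i with a | a <;> rcases e.symm j with b | b <;> rfl
      have hEq : Cmat (k+1) - ((2:ℝ)^(2*(k+1)))⁻¹ • Jmat (k+1) =
          Matrix.reindex e e
            (Matrix.fromBlocks D 0 0 D +
              c • Matrix.fromBlocks (Jmat k) (-(Jmat k)) (-(Jmat k)) (Jmat k)) := by
        rw [show Cmat (k+1) = Matrix.reindex e e
            (Matrix.fromBlocks (Cmat k) (-((1:ℝ)/2^(2*k+1)) • Jmat k)
              (-((1:ℝ)/2^(2*k+1)) • Jmat k) (Cmat k)) from rfl, hJ]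
        ext i j
        rw [Matrix.sub_apply, Matrix.smul_apply, reindex_apply, reindex_apply, reindex_apply,
          submatrix_apply, submatrix_apply, submatrix_apply]
        rcases e.symm i with a | a <;> rcases e.symm j with b | b <;>
          · simp only [fromBlocks_apply₁₁, fromBlocks_apply₁₂, fromBlocks_apply₂₁,
              fromBlocks_apply₂₂, Matrix.add_apply, Matrix.smul_apply, Matrix.sub_apply, Matrix.neg_apply, hD, hc,
              Jmat, of_apply, Matrix.zero_apply, smul_eq_mul]
            simp only [show 2*(k+1) = 2*k+2 from by ring, pow_succ]
            field_simp
            ring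
      rw [hEq]
      rw [Matrix.reindex_apply]
      rw [Matrix.posSemidef_submatrix_equiv]
      exact psd_add (psd_blockDiag ih ih) (psd_smul (psd_W k) (by positivity))

theorem Cmat_posSemidef (k : ℕ) (hk : 1 ≤ k) : (Cmat k).PosSemidef := by
  have h : Cmat k = (Cmat k - ((2:ℝ)^(2*k))⁻¹ • Jmat k) + ((2:ℝ)^(2*k))⁻¹ • Jmat k := by abel
  rw [h]
  exact psd_add (key k) (psd_smul (Jmat_psd k) (by positivity))
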